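/- Let G be a connected graph and c : V(G) → ℝ a weight function with c(v) ≥ 1 for all v ∈ V(G), and let N = ∑_{v∈V(G)} c(v). Then the weighted average eccentricity avec_c(G) = (∑_{v} c(v)e(v))/N is at most the average eccentricity of the path P_{⌈N⌉}. -/

import Mathlib

set_option linter.unusedSectionVars false
open SimpleGraph Finset

noncomputable def ecc {V : Type*} [Fintype V] (G : SimpleGraph V) (v : V) : ℕ :=
  Finset.univ.sup (G.dist v)

noncomputable def avec {V : Type*} [Fintype V] (G : SimpleGraph V) : ℝ :=
  (∑ v, (ecc G v : ℝ)) / (Fintype.card V)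

section main
variable {V : Type*} [DecidableEq V]

lemma reach_del {G : SimpleGraph V} {v w : V}
    (h : (G.deleteEdges {s(v,w)}).Reachable v w) {a b : V} (p : G.Walk a b) :
    (G.deleteEdges {s(v,w)}).Reachable a b := by
  induction p with
  | nil => exact Reachable.refl _
  | cons hadj q ih =>
    rename_i x y z
    refine Reachable.trans ?_ ih
    by_cases he : s(x,y) = s(v,w)
    · rw [Sym2.eq_iff] at he
      rcases he with ⟨rfl, rfl⟩ | ⟨rfl, rfl⟩
      · exact h
      · exact h.symm
    · exact Adj.reachable (by simp [deleteEdges_adj, hadj, he])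

lemma exists_spanning_tree [Fintype V] (G : SimpleGraph V) (h : G.Connected) :
    ∃ T : SimpleGraph V, T ≤ G ∧ T.Connected ∧ T.IsAcyclic := by
  classical
  obtain ⟨k, hk⟩ : ∃ k, G.edgeFinset.card ≤ k := ⟨_, le_rfl⟩
  induction k generalizing G with
  | zero =>
    refine ⟨G, le_rfl, h, ?_⟩
    have h0 : G = ⊥ := edgeFinset_eq_empty.mp (Finset.card_eq_zero.mp (Nat.le_zero.mp hk))
    rw [h0]
    exact isAcyclic_bot
  | succ k ih =>
    by_cases ha : G.IsAcyclic
    · exact ⟨G, le_rfl, h, ha⟩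
    · rw [isAcyclic_iff_forall_adj_isBridge] at ha
      push_neg at ha
      obtain ⟨v, w, hadj, hnb⟩ := ha
      have hr : (G.deleteEdges {s(v,w)}).Reachable v w := by
        rw [isBridge_iff] at hnb
        push_neg at hnb
        exact hnb
      set G' := G.deleteEdges {s(v,w)} with hG'
      have hne : Nonempty V := h.nonempty
      have hconn' : G'.Connected :=
        ⟨fun a b => reach_del hr (h.preconnected a b).some⟩
      have hcard : G'.edgeFinset.card ≤ k := by
        have hss : G'.edgeFinset ⊂ G.edgeFinset := by
          refine Finset.ssubset_iff_of_subset (edgeFinset_mono (deleteEdges_le _)) |>.mpr ?_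
        
          refine ⟨s(v,w), ?_, ?_⟩
          · rwa [mem_edgeFinset, mem_edgeSet]
          · simp [mem_edgeFinset, edgeSet_deleteEdges]
        have := Finset.card_lt_card hss
        omega
      obtain ⟨T, hTle, hTc, hTa⟩ := ih G' hconn' (by convert hcard)
      exact ⟨T, le_trans hTle (deleteEdges_le _), hTc, hTa⟩

lemma getVert_mem_support {G : SimpleGraph V} {a b : V} (p : G.Walk a b) (j : ℕ) :
    p.getVert j ∈ p.support := by
  induction p generalizing j with
  | nil => simp [Walk.getVert]
  | cons h q ih =>
    cases j with
    | zero => simp [Walk.getVert]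
    | succ j => simp only [Walk.getVert_cons_succ, Walk.support_cons, List.mem_cons]
                exact Or.inr (ih j)

lemma dist_getVert_le {G : SimpleGraph V} (hc : G.Connected) {a b : V} (p : G.Walk a b)
    (j : ℕ) : G.dist a (p.getVert j) ≤ j := by
  induction p generalizing j with
  | nil => simp [Walk.getVert, SimpleGraph.dist_self]
  | cons h q ih =>
    rename_i x y z
    cases j with
    | zero => simp [Walk.getVert]
    | succ j =>
      rw [Walk.getVert_cons_succ]
      calc G.dist x (q.getVert j) ≤ G.dist x y + G.dist y (q.getVert j) := hc.dist_triangle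
        _ ≤ 1 + j := add_le_add (le_of_eq (SimpleGraph.dist_eq_one_iff_adj.mpr h)) (ih j)
        _ = j + 1 := by omega

lemma dist_getVert_le' {G : SimpleGraph V} {a b : V} (p : G.Walk a b)
    (j : ℕ) : G.dist (p.getVert j) b ≤ p.length - j := by
  induction p generalizing j with
  | nil => simp [Walk.getVert]
  | cons h q ih =>
    rename_i x y z
    cases j with
    | zero =>
      simpa using SimpleGraph.dist_le (Walk.cons h q)
    | succ j =>
      rw [Walk.getVert_cons_succ]
      simpa using ih j

lemma geodesic_split {G : SimpleGraph V} (hc : G.Connected) {a b m : V} {p : G.Walk a b}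
    (hp : p.length = G.dist a b) (hm : m ∈ p.support) :
    G.dist a m + G.dist m b = G.dist a b ∧
      (p.takeUntil m hm).length = G.dist a m ∧ (p.dropUntil m hm).length = G.dist m b := by
  have h1 : G.dist a m ≤ (p.takeUntil m hm).length := SimpleGraph.dist_le _
  have h2 : G.dist m b ≤ (p.dropUntil m hm).length := SimpleGraph.dist_le _
  have h3 : (p.takeUntil m hm).length + (p.dropUntil m hm).length = p.length := by
    rw [← Walk.length_append, Walk.take_spec]
  have h4 : G.dist a b ≤ G.dist a m + G.dist m b := hc.dist_triangle
  omega

lemma geodesic_getVert {G : SimpleGraph V} (hc : G.Connected) {a b : V} {p : G.Walk a b}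
    (hp : p.length = G.dist a b) {j : ℕ} (hj : j ≤ p.length) :
    G.dist a (p.getVert j) = j := by
  have h1 := dist_getVert_le hc p j
  have h2 := dist_getVert_le' p j
  have h3 := (geodesic_split hc hp (getVert_mem_support p j)).1
  omega
lemma geodesic_between {G : SimpleGraph V} (hc : G.Connected) {a b : V} {s : G.Walk a b}
    (hs : s.length = G.dist a b) {m1 m2 : V} (h1 : m1 ∈ s.support) (h2 : m2 ∈ s.support)
    (hle : G.dist a m1 ≤ G.dist a m2) : G.dist a m1 + G.dist m1 m2 = G.dist a m2 := by
  obtain ⟨hsplit1, htu, hdu⟩ := geodesic_split hc hs h1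
  have hmem : m2 ∈ (s.takeUntil m1 h1).support ∨ m2 ∈ (s.dropUntil m1 h1).support := by
    have := Walk.take_spec s h1
    have h2' := h2
    rw [← this, Walk.support_append, List.mem_append] at h2'
    exact h2'.imp id List.mem_of_mem_tail
  rcases hmem with hm | hm
  · obtain ⟨hsp, -, -⟩ := geodesic_split hc htu hm
    have hz : G.dist m2 m1 = 0 ∧ G.dist a m2 = G.dist a m1 := by omega
    have : m2 = m1 := (hc.dist_eq_zero_iff).mp hz.1
    subst this
    simp [SimpleGraph.dist_self]
  · obtain ⟨hsp, -, -⟩ := geodesic_split hc hdu hm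
    obtain ⟨hsplit2, -, -⟩ := geodesic_split hc hs h2
    omega

lemma tree_meet {G : SimpleGraph V} (hc : G.Connected) (hac : G.IsAcyclic)
    {a b c : V} {p : G.Walk a b} {q : G.Walk a c}
    (hp : p.length = G.dist a b) (hq : q.length = G.dist a c) :
    ∃ m, ∃ (_ : m ∈ p.support) (_ : m ∈ q.support),
      G.dist b m + G.dist m c = G.dist b c := by
  classical
  set S : Finset V := p.support.toFinset ∩ q.support.toFinset with hS
  have hane : a ∈ S := by
    simp [hS, List.mem_toFinset, Walk.start_mem_support]
  obtain ⟨m, hmS, hmax⟩ := S.exists_max_image (G.dist a) ⟨a, hane⟩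
  rw [hS, Finset.mem_inter, List.mem_toFinset, List.mem_toFinset] at hmS
  obtain ⟨hmp, hmq⟩ := hmS
  refine ⟨m, hmp, hmq, ?_⟩
  obtain ⟨hsplitp, -, hdp⟩ := geodesic_split hc hp hmp
  obtain ⟨hsplitq, -, hdq⟩ := geodesic_split hc hq hmq
  set dp := p.dropUntil m hmp with hdpdef
  set dq := q.dropUntil m hmq with hdqdef
  -- disjointness
  have hdisj : ∀ x, x ∈ dp.support → x ∈ dq.support → x = m := by
    intro x hxp hxq
    by_contra hne
    have hxS : x ∈ S := by
      rw [hS, Finset.mem_inter, List.mem_toFinset, List.mem_toFinset]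
      exact ⟨Walk.support_dropUntil_subset p hmp hxp, Walk.support_dropUntil_subset q hmq hxq⟩
    have hle := hmax x hxS
    obtain ⟨hsx, -, -⟩ := geodesic_split hc hdp hxp
    have htri : G.dist a b ≤ G.dist a x + G.dist x b := hc.dist_triangle
    have hpos : 0 < G.dist m x := hc.pos_dist_of_ne (Ne.symm hne)
    omega
  have hdppath : dp.IsPath := Walk.isPath_of_length_eq_dist _ hdp
  have hdqpath : dq.IsPath := Walk.isPath_of_length_eq_dist _ hdq
  set W : G.Walk b c := dp.reverse.append dq with hW
  have hWlen : W.length = G.dist m b + G.dist m c := by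
    rw [hW, Walk.length_append, Walk.length_reverse, hdp, hdq]
  have hWpath : W.IsPath := by
    rw [hW, Walk.isPath_def, Walk.support_append]
    refine List.Nodup.append ?_ ?_ ?_
    · rw [Walk.support_reverse, List.nodup_reverse]
      exact hdppath.support_nodup
    · exact hdqpath.support_nodup.tail
    · intro x hx1 hx2
      rw [Walk.support_reverse, List.mem_reverse] at hx1
      have hx2' : x ∈ dq.support := List.mem_of_mem_tail hx2
      have hxm := hdisj x hx1 hx2'
      subst hxm
      have hnd := hdqpath.support_nodup
      rw [Walk.support_eq_cons dq, List.nodup_cons] at hnd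
      exact hnd.1 hx2
  obtain ⟨g, hglen⟩ := hc.exists_walk_length_eq_dist b c
  have hgpath : g.IsPath := Walk.isPath_of_length_eq_dist _ hglen
  have heq : (⟨W, hWpath⟩ : G.Path b c) = ⟨g, hgpath⟩ := hac.path_unique _ _
  have hlen : W.length = g.length := by rw [Subtype.mk.injEq] at heq; rw [heq]
  rw [hWlen, hglen] at hlen
  have hcomm : G.dist b m = G.dist m b := SimpleGraph.dist_comm
  omega

lemma tree_dist_le_max {G : SimpleGraph V} (hc : G.Connected) (hac : G.IsAcyclic)
    {x y : V} (hxy : ∀ a b, G.dist a b ≤ G.dist x y) (v z : V) :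
    G.dist v z ≤ max (G.dist v x) (G.dist v y) := by
  obtain ⟨p, hp⟩ := hc.exists_walk_length_eq_dist v x
  obtain ⟨q, hq⟩ := hc.exists_walk_length_eq_dist v y
  obtain ⟨s, hs⟩ := hc.exists_walk_length_eq_dist v z
  obtain ⟨m1, hm1p, hm1s, e1⟩ := tree_meet hc hac hp hs
  obtain ⟨m2, hm2q, hm2s, e2⟩ := tree_meet hc hac hq hs
  obtain ⟨sp1, -, -⟩ := geodesic_split hc hp hm1p
  obtain ⟨ss1, -, -⟩ := geodesic_split hc hs hm1s
  obtain ⟨sq2, -, -⟩ := geodesic_split hc hq hm2q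
  obtain ⟨ss2, -, -⟩ := geodesic_split hc hs hm2s
  rcases le_total (G.dist v m1) (G.dist v m2) with hrel | hrel
  · have hbet := geodesic_between hc hs hm1s hm2s hrel
    have htri : G.dist x y ≤ G.dist x m1 + (G.dist m1 m2 + G.dist m2 y) :=
      le_trans hc.dist_triangle (by gcongr; exact hc.dist_triangle)
    have hdd := hxy x z
    have c1 : G.dist x m1 = G.dist m1 x := SimpleGraph.dist_comm
    have c2 : G.dist m2 y = G.dist y m2 := SimpleGraph.dist_comm
    have goal : G.dist v z ≤ G.dist v y := by omega
    exact le_trans goal (le_max_right _ _)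
  · have hbet := geodesic_between hc hs hm2s hm1s hrel
    have htri : G.dist x y ≤ G.dist x m1 + (G.dist m1 m2 + G.dist m2 y) :=
      le_trans hc.dist_triangle (by gcongr; exact hc.dist_triangle)
    have hdd := hxy y z
    have c1 : G.dist x m1 = G.dist m1 x := SimpleGraph.dist_comm
    have c2 : G.dist m2 y = G.dist y m2 := SimpleGraph.dist_comm
    have c4 : G.dist m2 m1 = G.dist m1 m2 := SimpleGraph.dist_comm
    have goal : G.dist v z ≤ G.dist v x := by omega
    exact le_trans goal (le_max_left _ _)

lemma dist_le_ecc {V : Type*} [Fintype V] (G : SimpleGraph V) (v w : V) :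
    G.dist v w ≤ ecc G v := Finset.le_sup (Finset.mem_univ w)

lemma ecc_exists {V : Type*} [Fintype V] [Nonempty V] (G : SimpleGraph V) (v : V) :
    ∃ w, ecc G v = G.dist v w := by
  obtain ⟨w, -, hw⟩ := Finset.exists_mem_eq_sup Finset.univ univ_nonempty (G.dist v)
  exact ⟨w, hw⟩

lemma far_count [Fintype V] {H : SimpleGraph V} (hc : H.Connected) {x y0 : V} {t : ℕ}
    (hty : t ≤ H.dist x y0) :
    ((univ : Finset V).filter fun v => t ≤ H.dist x v).card + t ≤ Fintype.card V := by
  obtain ⟨p, hp⟩ := hc.exists_walk_length_eq_dist x y0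
  set B : Finset V := (Finset.range t).image (fun j => p.getVert j) with hB
  have hdB : ∀ j ∈ Finset.range t, H.dist x (p.getVert j) = j := by
    intro j hj
    rw [Finset.mem_range] at hj
    exact geodesic_getVert hc hp (by omega)
  have hcardB : B.card = t := by
    rw [hB, Finset.card_image_of_injOn, Finset.card_range]
    intro i hi j hj hij
    simp only [Finset.coe_range, Set.mem_Iio] at hi hj
    have h1 : H.dist x (p.getVert i) = i := geodesic_getVert hc hp (by omega)
    have h2 : H.dist x (p.getVert j) = j := geodesic_getVert hc hp (by omega)
    simp only at hij
    rw [hij] at h1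
    omega
  have hdisj : Disjoint ((univ : Finset V).filter fun v => t ≤ H.dist x v) B := by
    rw [Finset.disjoint_left]
    intro v hv hvB
    rw [Finset.mem_filter] at hv
    rw [hB, Finset.mem_image] at hvB
    obtain ⟨j, hj, rfl⟩ := hvB
    have := hdB j hj
    rw [Finset.mem_range] at hj
    omega
  calc ((univ : Finset V).filter fun v => t ≤ H.dist x v).card + t
      = (((univ : Finset V).filter fun v => t ≤ H.dist x v) ∪ B).card := by
        rw [Finset.card_union_of_disjoint hdisj, hcardB]
    _ ≤ (univ : Finset V).card := Finset.card_le_card (Finset.subset_univ _)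
    _ = Fintype.card V := Finset.card_univ

lemma key_count [Fintype V] (G : SimpleGraph V) (hG : G.Connected) (t : ℕ)
    (htw : ∃ v w, t ≤ G.dist v w) :
    ((univ : Finset V).filter fun v => t ≤ ecc G v).card + 2 * t ≤ 2 * Fintype.card V := by
  classical
  have hne : Nonempty V := hG.nonempty
  obtain ⟨T, hTle, hTc, hTa⟩ := exists_spanning_tree G hG
  have hdistle : ∀ a b, G.dist a b ≤ T.dist a b := fun a b =>
    Reachable.dist_anti hTle (hTc.preconnected a b)
  obtain ⟨pr, -, hpr⟩ := Finset.exists_max_image (univ ×ˢ univ : Finset (V × V))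
      (fun pr => T.dist pr.1 pr.2) (by simp [Finset.univ_nonempty])
  set x := pr.1
  set y := pr.2
  have hxy : ∀ a b, T.dist a b ≤ T.dist x y := fun a b =>
    hpr (a, b) (by simp)
  obtain ⟨v0, w0, hvw⟩ := htw
  have htxy : t ≤ T.dist x y := le_trans hvw (le_trans (hdistle v0 w0) (hxy v0 w0))
  have hsub : ((univ : Finset V).filter fun v => t ≤ ecc G v) ⊆
      ((univ : Finset V).filter fun v => t ≤ T.dist x v) ∪
      ((univ : Finset V).filter fun v => t ≤ T.dist y v) := by
    intro v hv
    rw [Finset.mem_filter] at hv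
    obtain ⟨w, hw⟩ := ecc_exists G v
    have h1 : t ≤ T.dist v w := le_trans (hw ▸ hv.2) (hdistle v w)
    have h2 := tree_dist_le_max hTc hTa hxy v w
    rw [Finset.mem_union, Finset.mem_filter, Finset.mem_filter]
    have hcx : T.dist v x = T.dist x v := SimpleGraph.dist_comm
    have hcy : T.dist v y = T.dist y v := SimpleGraph.dist_comm
    rcases max_cases (T.dist v x) (T.dist v y) with ⟨hmax, -⟩ | ⟨hmax, -⟩
    · exact Or.inl ⟨Finset.mem_univ v, by omega⟩
    · exact Or.inr ⟨Finset.mem_univ v, by omega⟩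
  have hcard := Finset.card_le_card hsub
  have hcu := Finset.card_union_le ((univ : Finset V).filter fun v => t ≤ T.dist x v)
      ((univ : Finset V).filter fun v => t ≤ T.dist y v)
  have hfx := far_count hTc htxy
  have htyx : t ≤ T.dist y x := by
    have : T.dist x y = T.dist y x := SimpleGraph.dist_comm
    omega
  have hfy := far_count hTc htyx
  omega

lemma ecc_lt_card {V : Type*} [Fintype V] {G : SimpleGraph V} (hG : G.Connected) (v : V) :
    ecc G v + 1 ≤ Fintype.card V := by
  have hne : Nonempty V := hG.nonempty
  obtain ⟨w, hw⟩ := ecc_exists G v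
  obtain ⟨p, hp⟩ := hG.exists_walk_length_eq_dist v w
  have := (Walk.isPath_of_length_eq_dist p hp).length_lt
  omega

end main

lemma pathWalk_bound {m : ℕ} {i j : Fin m} (p : (pathGraph m).Walk i j) :
    (i:ℕ) ≤ (j:ℕ) + p.length ∧ (j:ℕ) ≤ (i:ℕ) + p.length := by
  induction p with
  | nil => simp
  | cons h q ih =>
    rename_i x y z
    rw [pathGraph_adj] at h
    rw [Walk.length_cons]
    omega

lemma pathGraph_ecc_ge {m : ℕ} (hpcon : (pathGraph m).Connected) (hm : 1 ≤ m) (i : Fin m) :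
    max (i:ℕ) (m - 1 - (i:ℕ)) ≤ ecc (pathGraph m) i := by
  have hz : (0:ℕ) < m := hm
  set z : Fin m := ⟨0, hz⟩
  set e : Fin m := ⟨m-1, by omega⟩
  obtain ⟨p, hp⟩ := hpcon.exists_walk_length_eq_dist i z
  obtain ⟨q, hq⟩ := hpcon.exists_walk_length_eq_dist i e
  have h1 := (pathWalk_bound p).1
  have h2 := (pathWalk_bound q).2
  have hze : (z:ℕ) = 0 := rfl
  have hee : (e:ℕ) = m - 1 := rfl
  have l1 := dist_le_ecc (pathGraph m) i z
  have l2 := dist_le_ecc (pathGraph m) i e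
  omega

lemma filter_val_lt_card {m k : ℕ} (hk : k ≤ m) :
    ((univ : Finset (Fin m)).filter fun i : Fin m => (i:ℕ) < k).card = k := by
  have himg : ((univ : Finset (Fin m)).filter fun i : Fin m => (i:ℕ) < k).image Fin.val
      = Finset.range k := by
    ext a
    simp only [Finset.mem_image, Finset.mem_filter, Finset.mem_univ, true_and, Finset.mem_range]
    constructor
    · rintro ⟨i, hi, rfl⟩; exact hi
    · intro ha; exact ⟨⟨a, by omega⟩, ha, rfl⟩
  have := Finset.card_image_of_injective
    ((univ : Finset (Fin m)).filter fun i : Fin m => (i:ℕ) < k) Fin.val_injective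
  rw [himg, Finset.card_range] at this
  omega

lemma filter_val_ge_card {m t : ℕ} (ht : t ≤ m) :
    ((univ : Finset (Fin m)).filter fun i : Fin m => t ≤ (i:ℕ)).card = m - t := by
  have h := Finset.card_filter_add_card_filter_not
    (s := (univ : Finset (Fin m))) (p := fun i : Fin m => (i:ℕ) < t)
  rw [filter_val_lt_card ht, Finset.card_univ, Fintype.card_fin] at h
  have heq : ((univ : Finset (Fin m)).filter fun i : Fin m => ¬ (i:ℕ) < t)
      = ((univ : Finset (Fin m)).filter fun i : Fin m => t ≤ (i:ℕ)) := by
    apply Finset.filter_congr; intro i _; simp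
  rw [heq] at h
  omega

-- path profile counts
lemma profile_count_all {m t : ℕ} (ht1 : 1 ≤ t) (h2t : 2*t ≤ m) :
    ((univ : Finset (Fin m)).filter fun i : Fin m => t ≤ max (i:ℕ) (m - 1 - (i:ℕ))).card = m := by
  have : ((univ : Finset (Fin m)).filter fun i : Fin m => t ≤ max (i:ℕ) (m - 1 - (i:ℕ)))
      = univ := by
    rw [Finset.filter_eq_self]
    intro i _
    have := i.is_lt
    omega
  rw [this, Finset.card_univ, Fintype.card_fin]

lemma profile_count_ge {m t : ℕ} (ht1 : 1 ≤ t) (h2t : m < 2*t) (htm : t ≤ m) :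
    2*(m - t) ≤
    ((univ : Finset (Fin m)).filter fun i : Fin m => t ≤ max (i:ℕ) (m - 1 - (i:ℕ))).card := by
  set A := (univ : Finset (Fin m)).filter fun i : Fin m => (i:ℕ) < m - t with hA
  set B := (univ : Finset (Fin m)).filter fun i : Fin m => t ≤ (i:ℕ) with hB
  have hAsub : A ⊆ (univ : Finset (Fin m)).filter
      fun i : Fin m => t ≤ max (i:ℕ) (m - 1 - (i:ℕ)) := by
    intro i hi
    rw [hA, Finset.mem_filter] at hi
    rw [Finset.mem_filter]
    refine ⟨Finset.mem_univ _, ?_⟩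
    omega
  have hBsub : B ⊆ (univ : Finset (Fin m)).filter
      fun i : Fin m => t ≤ max (i:ℕ) (m - 1 - (i:ℕ)) := by
    intro i hi
    rw [hB, Finset.mem_filter] at hi
    rw [Finset.mem_filter]
    refine ⟨Finset.mem_univ _, ?_⟩
    omega
  have hdisj : Disjoint A B := by
    rw [Finset.disjoint_left]
    intro i hiA hiB
    rw [hA, Finset.mem_filter] at hiA
    rw [hB, Finset.mem_filter] at hiB
    omega
  have hcardA : A.card = m - t := filter_val_lt_card (by omega)
  have hcardB : B.card = m - t := filter_val_ge_card htm
  calc 2*(m-t) = (A ∪ B).card := by rw [Finset.card_union_of_disjoint hdisj, hcardA, hcardB]; omega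
    _ ≤ _ := Finset.card_le_card (Finset.union_subset hAsub hBsub)

-- layer cake
lemma layer_cake {α : Type*} [Fintype α] (f : α → ℕ) (c : α → ℝ) (M : ℕ)
    (hf : ∀ a, f a ≤ M) :
    ∑ a, c a * (f a : ℝ)
      = ∑ t ∈ Finset.Icc 1 M, ∑ a ∈ univ.filter (fun a => t ≤ f a), c a := by
  symm
  calc ∑ t ∈ Finset.Icc 1 M, ∑ a ∈ univ.filter (fun a => t ≤ f a), c a
      = ∑ t ∈ Finset.Icc 1 M, ∑ a, if t ≤ f a then c a else 0 := by
        apply Finset.sum_congr rfl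
        intro t _
        rw [Finset.sum_filter]
    _ = ∑ a, ∑ t ∈ Finset.Icc 1 M, if t ≤ f a then c a else 0 := Finset.sum_comm
    _ = ∑ a, c a * (f a : ℝ) := by
        apply Finset.sum_congr rfl
        intro a _
        rw [← Finset.sum_filter]
        have hfil : (Finset.Icc 1 M).filter (fun t => t ≤ f a) = Finset.Icc 1 (f a) := by
          ext s
          simp only [Finset.mem_filter, Finset.mem_Icc]
          have := hf a
          omega
        rw [hfil, Finset.sum_const, Nat.card_Icc]
        simp only [Nat.add_sub_cancel, nsmul_eq_mul]
        ring

theorem stmt2 {V : Type*} [Fintype V] (G : SimpleGraph V) (hG : G.Connected)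
    (c : V → ℝ) (hc : ∀ v, 1 ≤ c v) (N : ℝ) (hN : N = ∑ v, c v) :
    (∑ v, c v * (ecc G v : ℝ)) / N ≤ avec (SimpleGraph.pathGraph ⌈N⌉₊) := by
  classical
  have hne : Nonempty V := hG.nonempty
  set n := Fintype.card V with hn
  have hn1 : 1 ≤ n := Fintype.card_pos
  have hNn : (n : ℝ) ≤ N := by
    rw [hN]
    calc (n:ℝ) = ∑ _v : V, (1:ℝ) := by
          rw [Finset.sum_const, Finset.card_univ, nsmul_eq_mul, mul_one, hn]
      _ ≤ ∑ v, c v := Finset.sum_le_sum fun v _ => hc v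
  have hN1 : (1:ℝ) ≤ N := le_trans (by exact_mod_cast hn1) hNn
  have hNpos : (0:ℝ) < N := by linarith
  set m := ⌈N⌉₊ with hm
  have hNm : N ≤ (m:ℝ) := Nat.le_ceil N
  have hnm : n ≤ m := by
    have h : (n:ℝ) ≤ (m:ℝ) := le_trans hNn hNm
    exact_mod_cast h
  have hm1 : 1 ≤ m := le_trans hn1 hnm
  have hmpos : (0:ℝ) < (m:ℝ) := by exact_mod_cast hm1
  obtain ⟨m', hm'⟩ : ∃ m', m = m' + 1 := ⟨m-1, by omega⟩
  have hpcon : (pathGraph m).Connected := by rw [hm']; exact pathGraph_connected m'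
  set D := (univ : Finset V).sup (fun v => ecc G v) with hD
  have heccD : ∀ v, ecc G v ≤ D := fun v => Finset.le_sup (Finset.mem_univ v)
  have hDn : D + 1 ≤ n := by
    obtain ⟨v, -, hv⟩ := Finset.exists_mem_eq_sup (univ : Finset V) univ_nonempty
      (fun v => ecc G v)
    rw [hD, hv]
    exact ecc_lt_card hG v
  have hwit : ∀ t, t ≤ D → ∃ v w, t ≤ G.dist v w := by
    intro t ht
    obtain ⟨v, -, hv⟩ := Finset.exists_mem_eq_sup (univ : Finset V) univ_nonempty
      (fun v => ecc G v)
    obtain ⟨w, hw⟩ := ecc_exists G v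
    refine ⟨v, w, ?_⟩
    rw [hD, hv, hw] at ht
    exact ht
  set P : ℕ → ℕ := fun t => ((univ : Finset (Fin m)).filter
      fun i : Fin m => t ≤ max (i:ℕ) (m - 1 - (i:ℕ))).card with hP
  have hterm : ∀ t ∈ Finset.Icc 1 D,
      (∑ v ∈ univ.filter (fun v => t ≤ ecc G v), c v) ≤ (N / m) * (P t : ℝ) := by
    intro t ht
    rw [Finset.mem_Icc] at ht
    by_cases h2t : 2*t ≤ m
    · have hPt : P t = m := profile_count_all ht.1 h2t
      have hsum : (∑ v ∈ univ.filter (fun v => t ≤ ecc G v), c v) ≤ N := by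
        rw [hN]
        apply Finset.sum_le_sum_of_subset_of_nonneg (Finset.subset_univ _)
        intro v _ _
        linarith [hc v]
      rw [hPt]
      calc (∑ v ∈ univ.filter (fun v => t ≤ ecc G v), c v) ≤ N := hsum
        _ = N / m * (m:ℝ) := by field_simp
    · push_neg at h2t
      have htm : t ≤ m := by omega
      have hPt : 2*(m - t) ≤ P t := profile_count_ge ht.1 h2t htm
      set s := (univ.filter (fun v => t ≤ ecc G v)).card with hs
      set k := (univ.filter (fun v => ¬ t ≤ ecc G v)).card with hk
      have hsk : s + k = n := by
        rw [hs, hk, Finset.card_filter_add_card_filter_not, Finset.card_univ]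
      have hkey := key_count G hG t (hwit t ht.2)
      have hkn : 2*t ≤ n + k := by
        rw [← hn] at hkey
        omega
      have hW : (∑ v ∈ univ.filter (fun v => t ≤ ecc G v), c v) ≤ N - k := by
        have hsplit := Finset.sum_filter_add_sum_filter_not univ (fun v => t ≤ ecc G v) c
        have hk1 : (k:ℝ) ≤ ∑ v ∈ univ.filter (fun v => ¬ t ≤ ecc G v), c v := by
          calc (k:ℝ) = ((univ.filter (fun v => ¬ t ≤ ecc G v)).card : ℕ) • (1:ℝ) := by
                rw [hk]; simp
            _ ≤ _ := Finset.card_nsmul_le_sum _ _ _ (fun v _ => hc v)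
        rw [hN]
        linarith [hsplit]
      have harith : N - (k:ℝ) ≤ N / m * ((2*(m - t) : ℕ) : ℝ) := by
        rw [div_mul_eq_mul_div, le_div_iff₀ hmpos]
        have hcast : ((2*(m-t) : ℕ) : ℝ) = 2*((m:ℝ) - (t:ℝ)) := by
          have : ((m - t : ℕ) : ℝ) = (m:ℝ) - (t:ℝ) := by
            rw [Nat.cast_sub htm]
          push_cast [this]
          ring
        rw [hcast]
        have f1 : 2*(t:ℝ) ≤ (n:ℝ) + (k:ℝ) := by exact_mod_cast hkn
        have f2 : (0:ℝ) ≤ (k:ℝ) := by positivity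
        have f3 : (t:ℝ) ≤ (m:ℝ) := by exact_mod_cast htm
        nlinarith [hNn, hNm, hNpos, hmpos]
      calc (∑ v ∈ univ.filter (fun v => t ≤ ecc G v), c v) ≤ N - k := hW
        _ ≤ N / m * ((2*(m-t) : ℕ) : ℝ) := harith
        _ ≤ N / m * (P t : ℝ) := by
            apply mul_le_mul_of_nonneg_left _ (by positivity)
            exact_mod_cast hPt
  have hLHS := layer_cake (fun v => ecc G v) c D heccD
  have step1 : (∑ v, c v * (ecc G v : ℝ)) ≤ ∑ t ∈ Finset.Icc 1 D, (N/m) * (P t : ℝ) := by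
    rw [hLHS]
    exact Finset.sum_le_sum hterm
  have step2 : ∑ t ∈ Finset.Icc 1 D, (N/m) * (P t : ℝ)
      ≤ ∑ t ∈ Finset.Icc 1 (m-1), (N/m) * (P t : ℝ) := by
    apply Finset.sum_le_sum_of_subset_of_nonneg
    · apply Finset.Icc_subset_Icc_right
      omega
    · intro t _ _
      positivity
  have hprof_le : ∀ i : Fin m, max (i:ℕ) (m - 1 - (i:ℕ)) ≤ m - 1 := by
    intro i
    have := i.is_lt
    omega
  have hPC := layer_cake (α := Fin m) (fun i => max (i:ℕ) (m - 1 - (i:ℕ)))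
    (fun _ => (1:ℝ)) (m-1) hprof_le
  have hPsum : ∑ t ∈ Finset.Icc 1 (m-1), (P t : ℝ)
      = ∑ i : Fin m, ((max (i:ℕ) (m - 1 - (i:ℕ)) : ℕ) : ℝ) := by
    calc ∑ t ∈ Finset.Icc 1 (m-1), (P t : ℝ)
        = ∑ t ∈ Finset.Icc 1 (m-1), ∑ _a ∈ (univ : Finset (Fin m)).filter
            (fun i : Fin m => t ≤ max (i:ℕ) (m - 1 - (i:ℕ))), (1:ℝ) := by
          apply Finset.sum_congr rfl
          intro t _
          rw [Finset.sum_const, nsmul_eq_mul, mul_one, hP]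
      _ = ∑ i : Fin m, (1:ℝ) * ((max (i:ℕ) (m - 1 - (i:ℕ)) : ℕ) : ℝ) := hPC.symm
      _ = _ := by simp
  have step3 : ∑ t ∈ Finset.Icc 1 (m-1), (N/m) * (P t : ℝ)
      = (N/m) * ∑ i : Fin m, ((max (i:ℕ) (m - 1 - (i:ℕ)) : ℕ) : ℝ) := by
    rw [← Finset.mul_sum, hPsum]
  have step4 : ∑ i : Fin m, ((max (i:ℕ) (m - 1 - (i:ℕ)) : ℕ):ℝ)
      ≤ ∑ i : Fin m, (ecc (pathGraph m) i : ℝ) :=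
    Finset.sum_le_sum fun i _ => by exact_mod_cast pathGraph_ecc_ge hpcon hm1 i
  have main : (∑ v, c v * (ecc G v : ℝ))
      ≤ (N/m) * ∑ i : Fin m, (ecc (pathGraph m) i : ℝ) := by
    calc (∑ v, c v * (ecc G v : ℝ))
        ≤ ∑ t ∈ Finset.Icc 1 D, (N/m) * (P t : ℝ) := step1
      _ ≤ ∑ t ∈ Finset.Icc 1 (m-1), (N/m) * (P t : ℝ) := step2
      _ = (N/m) * ∑ i : Fin m, ((max (i:ℕ) (m - 1 - (i:ℕ)) : ℕ) : ℝ) := step3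
      _ ≤ (N/m) * ∑ i : Fin m, (ecc (pathGraph m) i : ℝ) :=
          mul_le_mul_of_nonneg_left step4 (by positivity)
  show (∑ v, c v * (ecc G v : ℝ)) / N ≤ avec (pathGraph m)
  unfold avec
  rw [Fintype.card_fin]
  rw [div_le_div_iff₀ hNpos hmpos]
  have hmul := mul_le_mul_of_nonneg_right main (le_of_lt hmpos)
  calc (∑ v, c v * (ecc G v:ℝ)) * m
      ≤ ((N/m) * ∑ i : Fin m, (ecc (pathGraph m) i : ℝ)) * m := hmul
    _ = (∑ i : Fin m, (ecc (pathGraph m) i : ℝ)) * N := by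
        field_simp
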